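/- Let X_u, X_v, X'_u, X'_v be mutually independent random variables, with X'_u distributed as X_u and X'_v distributed as X_v (so that (X'_u, X'_v) is an independent replicate of (X_u, X_v)). Let f be a measurable function of the two groups such that f(X_u, X_v) is square-integrable. Then the numerator of the grouped first-order Sobol' index satisfies the pick-freeze identity Var( E[ f(X_u, X_v) | X_u ] ) = E[ f(X_u, X_v) · ( f(X_u, X'_v) − f(X'_u, X'_v) ) ]. -/

import Mathlib

open MeasureTheory ProbabilityTheory

private lemma integrable_mul_of_memL2 {α : Type*} [MeasurableSpace α] {μ : Measure α}
    {f g : α → ℝ} (hf : MemLp f 2 μ) (hg : MemLp g 2 μ) :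
    Integrable (fun x => f x * g x) μ := by
  have h1 : Integrable (fun x => f x ^ 2) μ := hf.integrable_sq
  have h2 : Integrable (fun x => g x ^ 2) μ := hg.integrable_sq
  refine ((h1.add h2).div_const 2).mono'
    (hf.aestronglyMeasurable.mul hg.aestronglyMeasurable) ?_
  filter_upwards with x
  simp only [Pi.add_apply, Real.norm_eq_abs]
  nlinarith [abs_mul (f x) (g x), sq_abs (f x), sq_abs (g x),
    sq_nonneg (|f x| - |g x|), abs_nonneg (f x), abs_nonneg (g x)]

private lemma memL2_comp_of_map_eq {α β : Type*} [MeasurableSpace α] [MeasurableSpace β]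
    {μ : Measure α} {ν : Measure β} {q : α → β} (hq : Measurable q) (hmap : μ.map q = ν)
    {h : β → ℝ} (hh : AEStronglyMeasurable h ν) (hmem : MemLp h 2 ν) :
    MemLp (fun a => h (q a)) 2 μ :=
  (memLp_map_measure_iff (by rwa [hmap]) hq.aemeasurable).mp (by rwa [hmap])

private lemma integral_fst_prob {α β : Type*} [MeasurableSpace α] [MeasurableSpace β]
    (μ : Measure α) (κ : Measure β) [SFinite μ] [IsProbabilityMeasure κ] {h : α → ℝ}
    (hh : AEStronglyMeasurable h μ) :
    ∫ y, h y.1 ∂(μ.prod κ) = ∫ w, h w ∂μ := by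
  have hmap : Measure.map Prod.fst (μ.prod κ) = μ := by
    rw [Measure.map_fst_prod, measure_univ, one_smul]
  conv_rhs => rw [← hmap]
  rw [integral_map measurable_fst.aemeasurable (by rwa [hmap])]

/-- **Pick-freeze identity for the numerator of the grouped first-order Sobol' index.**
Let `X_u, X_v, X'_u, X'_v` be mutually independent (encoded as a chain of independences),
with `X'_u` distributed as `X_u` and `X'_v` distributed as `X_v`, so that `(X'_u, X'_v)` is
an independent replicate of `(X_u, X_v)`.  Then
`Var( E[ f(X_u, X_v) | X_u ] ) = E[ f(X_u, X_v) · ( f(X_u, X'_v) − f(X'_u, X'_v) ) ]`. -/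
theorem pick_freeze_first_order_numerator
    {Ω U V : Type*} [MeasurableSpace Ω] [MeasurableSpace U] [MeasurableSpace V]
    {μ : Measure Ω} [IsProbabilityMeasure μ]
    (Xu Xu' : Ω → U) (Xv Xv' : Ω → V)
    (hXu : Measurable Xu) (hXu' : Measurable Xu')
    (hXv : Measurable Xv) (hXv' : Measurable Xv')
    -- mutual independence of `X_u`, `X_v`, `X'_u`, `X'_v`:
    (hUV : IndepFun Xu Xv μ)
    (hUVU' : IndepFun (fun ω => (Xu ω, Xv ω)) Xu' μ)
    (hUVU'V' : IndepFun (fun ω => ((Xu ω, Xv ω), Xu' ω)) Xv' μ)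
    -- `X'_u` and `X'_v` are replicates of `X_u` and `X_v`:
    (hidU : IdentDistrib Xu' Xu μ μ) (hidV : IdentDistrib Xv' Xv μ μ)
    (f : U × V → ℝ) (hf : Measurable f)
    (hL2 : MemLp (fun ω => f (Xu ω, Xv ω)) 2 μ) :
    variance (μ[fun ω => f (Xu ω, Xv ω) | MeasurableSpace.comap Xu inferInstance]) μ
      = ∫ ω, f (Xu ω, Xv ω) * (f (Xu ω, Xv' ω) - f (Xu' ω, Xv' ω)) ∂μ := by
  have hpair : Measurable fun ω => (Xu ω, Xv ω) := hXu.prodMk hXv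
  have hm : MeasurableSpace.comap Xu inferInstance ≤ ‹MeasurableSpace Ω› := hXu.comap_le
  haveI hsf : SigmaFinite (μ.trim hm) := by infer_instance
  set νU : Measure U := μ.map Xu with hνU
  set νV : Measure V := μ.map Xv with hνV
  haveI : IsProbabilityMeasure νU := Measure.isProbabilityMeasure_map hXu.aemeasurable
  haveI : IsProbabilityMeasure νV := Measure.isProbabilityMeasure_map hXv.aemeasurable
  -- laws of the tuples
  have hρ : μ.map (fun ω => (Xu ω, Xv ω)) = νU.prod νV :=
    (indepFun_iff_map_prod_eq_prod_map_map hXu.aemeasurable hXv.aemeasurable).mp hUV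
  have htrip : μ.map (fun ω => ((Xu ω, Xv ω), Xu' ω)) = (νU.prod νV).prod νU := by
    rw [(indepFun_iff_map_prod_eq_prod_map_map hpair.aemeasurable hXu'.aemeasurable).mp hUVU',
      hρ, hidU.map_eq, ← hνU]
  have hT : Measurable fun ω => (((Xu ω, Xv ω), Xu' ω), Xv' ω) :=
    (hpair.prodMk hXu').prodMk hXv'
  have hπ : μ.map (fun ω => (((Xu ω, Xv ω), Xu' ω), Xv' ω)) = ((νU.prod νV).prod νU).prod νV := by
    rw [(indepFun_iff_map_prod_eq_prod_map_map (hpair.prodMk hXu').aemeasurable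
      hXv'.aemeasurable).mp hUVU'V', htrip, hidV.map_eq, ← hνV]
  -- `f` is square-integrable for the product law
  have hfρ2 : MemLp f 2 (νU.prod νV) := by
    rw [← hρ]
    exact (memLp_map_measure_iff hf.aestronglyMeasurable hpair.aemeasurable).mpr hL2
  have hfρ1 : Integrable f (νU.prod νV) := hfρ2.integrable one_le_two
  have hsq : Integrable (fun w => f w ^ 2) (νU.prod νV) := hfρ2.integrable_sq
  -- the conditional mean function
  have hGsm : StronglyMeasurable fun u => ∫ v, f (u, v) ∂νV :=
    hf.stronglyMeasurable.integral_prod_right'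
  have hG2 : MemLp (fun u => ∫ v, f (u, v) ∂νV) 2 νU := by
    refine (memLp_two_iff_integrable_sq hGsm.aestronglyMeasurable).mpr ?_
    have hInt : Integrable (fun u => ∫ v, f (u, v) ^ 2 ∂νV) νU := hsq.integral_prod_left
    refine hInt.mono' ((hGsm.measurable.pow_const 2).aestronglyMeasurable) ?_
    filter_upwards [hsq.prod_right_ae] with u hu
    have hsec : MemLp (fun v => f (u, v)) 2 νV :=
      (memLp_two_iff_integrable_sq (hf.comp measurable_prodMk_left).aestronglyMeasurable).mpr hu
    have hvar := variance_nonneg (fun v => f (u, v)) νV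
    rw [variance_eq_sub hsec] at hvar
    simp only [Pi.pow_apply] at hvar
    rw [Real.norm_eq_abs, abs_of_nonneg (sq_nonneg _)]
    nlinarith [hvar]
  -- conditional expectation identification
  have hFint : Integrable (fun ω => f (Xu ω, Xv ω)) μ := hL2.integrable one_le_two
  have hGXu2 : MemLp (fun ω => ∫ v, f (Xu ω, v) ∂νV) 2 μ :=
    memL2_comp_of_map_eq hXu hνU.symm hGsm.aestronglyMeasurable hG2
  have hce : (fun ω => ∫ v, f (Xu ω, v) ∂νV) =ᵐ[μ]
      μ[(fun ω => f (Xu ω, Xv ω)) | MeasurableSpace.comap Xu inferInstance] := by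
    refine ae_eq_condExp_of_forall_setIntegral_eq hm hFint
      (fun s _ _ => (hGXu2.integrable one_le_two).integrableOn) ?_ ?_
    · rintro s ⟨A, hA, rfl⟩ -
      have hL : ∫ ω in Xu ⁻¹' A, (∫ v, f (Xu ω, v) ∂νV) ∂μ
          = ∫ u in A, (∫ v, f (u, v) ∂νV) ∂νU :=
        (setIntegral_map hA hGsm.aestronglyMeasurable hXu.aemeasurable).symm
      have hpre : (fun ω => (Xu ω, Xv ω)) ⁻¹' (A ×ˢ Set.univ) = Xu ⁻¹' A := by
        ext ω; simp
      have hR : ∫ ω in Xu ⁻¹' A, f (Xu ω, Xv ω) ∂μ = ∫ w in A ×ˢ Set.univ, f w ∂(νU.prod νV) := by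
        have h := setIntegral_map (μ := μ) (g := fun ω => (Xu ω, Xv ω))
          (hA.prod MeasurableSet.univ) hf.aestronglyMeasurable hpair.aemeasurable
        rw [hρ, hpre] at h
        exact h.symm
      have hrespr : (νU.restrict A).prod νV = (νU.prod νV).restrict (A ×ˢ Set.univ) := by
        rw [← Measure.prod_restrict, Measure.restrict_univ]
      have hprodint : Integrable f ((νU.restrict A).prod νV) := by
        rw [hrespr]; exact hfρ1.integrableOn
      have hmid : ∫ u in A, (∫ v, f (u, v) ∂νV) ∂νU = ∫ w in A ×ˢ Set.univ, f w ∂(νU.prod νV) := by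
        rw [← hrespr, integral_prod _ hprodint]
      exact hL.trans (hmid.trans hR.symm)
    · have hXum : Measurable[MeasurableSpace.comap Xu inferInstance] Xu :=
        measurable_iff_comap_le.mpr le_rfl
      exact ((hGsm.measurable.comp hXum).stronglyMeasurable).aestronglyMeasurable
  -- map identities for projections
  have hπ'fst : Measure.map Prod.fst ((νU.prod νV).prod νU) = νU.prod νV := by
    rw [Measure.map_fst_prod, measure_univ, one_smul]
  have hπ'snd : Measure.map Prod.snd ((νU.prod νV).prod νU) = νU := by
    rw [Measure.map_snd_prod, measure_univ, one_smul]
  have hρfst : Measure.map Prod.fst (νU.prod νV) = νU := by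
    rw [Measure.map_fst_prod, measure_univ, one_smul]
  have hπfst : Measure.map Prod.fst (((νU.prod νV).prod νU).prod νV) = (νU.prod νV).prod νU := by
    rw [Measure.map_fst_prod, measure_univ, one_smul]
  have hfst2 : Measure.map (Prod.fst ∘ Prod.fst : (U × V) × U → U) ((νU.prod νV).prod νU) = νU := by
    rw [← Measure.map_map measurable_fst measurable_fst, hπ'fst, hρfst]
  have hq1map : Measure.map (fun x : ((U × V) × U) × V => x.1.1)
      (((νU.prod νV).prod νU).prod νV) = νU.prod νV := by
    have he : (fun x : ((U × V) × U) × V => x.1.1) = (Prod.fst ∘ Prod.fst) := rfl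
    rw [he, ← Measure.map_map measurable_fst measurable_fst, hπfst, hπ'fst]
  have hq2map : Measure.map (fun x : ((U × V) × U) × V => (x.1.1.1, x.2))
      (((νU.prod νV).prod νU).prod νV) = νU.prod νV := by
    have he : (fun x : ((U × V) × U) × V => (x.1.1.1, x.2))
        = Prod.map (Prod.fst ∘ Prod.fst : (U × V) × U → U) id := by
      funext x; rfl
    rw [he, ← Measure.map_prod_map _ _ (measurable_fst.comp measurable_fst) measurable_id,
      hfst2, Measure.map_id]
  have hq3map : Measure.map (fun x : ((U × V) × U) × V => (x.1.2, x.2))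
      (((νU.prod νV).prod νU).prod νV) = νU.prod νV := by
    have he : (fun x : ((U × V) × U) × V => (x.1.2, x.2))
        = Prod.map (Prod.snd : (U × V) × U → U) id := by
      funext x; rfl
    rw [he, ← Measure.map_prod_map _ _ measurable_snd measurable_id, hπ'snd, Measure.map_id]
  -- square-integrability of the composed factors
  have hmem₁ : MemLp (fun x : ((U × V) × U) × V => f x.1.1) 2
      (((νU.prod νV).prod νU).prod νV) :=
    memL2_comp_of_map_eq (measurable_fst.comp measurable_fst) hq1map
      hf.aestronglyMeasurable hfρ2
  have hmem₂ : MemLp (fun x : ((U × V) × U) × V => f (x.1.1.1, x.2)) 2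
      (((νU.prod νV).prod νU).prod νV) :=
    memL2_comp_of_map_eq
      ((measurable_fst.comp (measurable_fst.comp measurable_fst)).prodMk measurable_snd)
      hq2map hf.aestronglyMeasurable hfρ2
  have hmem₃ : MemLp (fun x : ((U × V) × U) × V => f (x.1.2, x.2)) 2
      (((νU.prod νV).prod νU).prod νV) :=
    memL2_comp_of_map_eq
      ((measurable_snd.comp measurable_fst).prodMk measurable_snd)
      hq3map hf.aestronglyMeasurable hfρ2
  have hH₁int : Integrable (fun x : ((U × V) × U) × V => f x.1.1 * f (x.1.1.1, x.2))
      (((νU.prod νV).prod νU).prod νV) := integrable_mul_of_memL2 hmem₁ hmem₂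
  have hH₂int : Integrable (fun x : ((U × V) × U) × V => f x.1.1 * f (x.1.2, x.2))
      (((νU.prod νV).prod νU).prod νV) := integrable_mul_of_memL2 hmem₁ hmem₃
  have hmemA : MemLp (fun y : (U × V) × U => f y.1) 2 ((νU.prod νV).prod νU) :=
    memL2_comp_of_map_eq measurable_fst hπ'fst hf.aestronglyMeasurable hfρ2
  have hmemB : MemLp (fun y : (U × V) × U => ∫ v, f (y.2, v) ∂νV) 2 ((νU.prod νV).prod νU) :=
    memL2_comp_of_map_eq measurable_snd hπ'snd hGsm.aestronglyMeasurable hG2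
  have hmemC : MemLp (fun w : U × V => ∫ v, f (w.1, v) ∂νV) 2 (νU.prod νV) :=
    memL2_comp_of_map_eq measurable_fst hρfst hGsm.aestronglyMeasurable hG2
  have hIπ' : Integrable (fun y : (U × V) × U => f y.1 * ∫ v, f (y.2, v) ∂νV)
      ((νU.prod νV).prod νU) := integrable_mul_of_memL2 hmemA hmemB
  have hIρ : Integrable (fun w : U × V => f w * ∫ v, f (w.1, v) ∂νV) (νU.prod νV) :=
    integrable_mul_of_memL2 hfρ2 hmemC
  -- basic integral identities
  have hgInt_eq : ∫ u, (∫ v, f (u, v) ∂νV) ∂νU = ∫ w, f w ∂(νU.prod νV) :=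
    (integral_prod f hfρ1).symm
  have hEF : ∫ ω, f (Xu ω, Xv ω) ∂μ = ∫ w, f w ∂(νU.prod νV) := by
    rw [← hρ]
    exact (integral_map hpair.aemeasurable hf.aestronglyMeasurable).symm
  -- the two pick-freeze integrals
  have hC1 : ∫ x, f x.1.1 * f (x.1.1.1, x.2) ∂(((νU.prod νV).prod νU).prod νV)
      = ∫ u, (∫ v, f (u, v) ∂νV) * (∫ v, f (u, v) ∂νV) ∂νU := by
    rw [integral_prod _ hH₁int]
    simp_rw [integral_const_mul]
    have h2 : ∫ y : (U × V) × U, f y.1 * ∫ v, f (y.1.1, v) ∂νV ∂((νU.prod νV).prod νU)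
        = ∫ w : U × V, f w * ∫ v, f (w.1, v) ∂νV ∂(νU.prod νV) :=
      integral_fst_prob _ _ hIρ.aestronglyMeasurable
    rw [h2, integral_prod _ hIρ]
    dsimp only
    simp_rw [integral_mul_const]
  have hC2 : ∫ x, f x.1.1 * f (x.1.2, x.2) ∂(((νU.prod νV).prod νU).prod νV)
      = (∫ w, f w ∂(νU.prod νV)) * (∫ w, f w ∂(νU.prod νV)) := by
    rw [integral_prod _ hH₂int]
    simp_rw [integral_const_mul]
    rw [integral_prod _ hIπ']
    dsimp only
    simp_rw [integral_const_mul]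
    rw [integral_mul_const, hgInt_eq]
  -- transfer the pick-freeze integral to the product space
  have hHm : Measurable fun x : ((U × V) × U) × V =>
      f x.1.1 * (f (x.1.1.1, x.2) - f (x.1.2, x.2)) :=
    (hf.comp (measurable_fst.comp measurable_fst)).mul
      ((hf.comp ((measurable_fst.comp (measurable_fst.comp measurable_fst)).prodMk
        measurable_snd)).sub
        (hf.comp ((measurable_snd.comp measurable_fst).prodMk measurable_snd)))
  have hRHS : ∫ ω, f (Xu ω, Xv ω) * (f (Xu ω, Xv' ω) - f (Xu' ω, Xv' ω)) ∂μ
      = ∫ x, f x.1.1 * (f (x.1.1.1, x.2) - f (x.1.2, x.2))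
          ∂(((νU.prod νV).prod νU).prod νV) := by
    rw [← hπ, integral_map hT.aemeasurable hHm.aestronglyMeasurable]
  have hsplit : ∫ x, f x.1.1 * (f (x.1.1.1, x.2) - f (x.1.2, x.2))
        ∂(((νU.prod νV).prod νU).prod νV)
      = (∫ x, f x.1.1 * f (x.1.1.1, x.2) ∂(((νU.prod νV).prod νU).prod νV))
        - ∫ x, f x.1.1 * f (x.1.2, x.2) ∂(((νU.prod νV).prod νU).prod νV) := by
    rw [← integral_sub hH₁int hH₂int]
    exact integral_congr_ae (Filter.Eventually.of_forall fun x => by ring)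
  -- variance side
  have hcond2 : MemLp (μ[(fun ω => f (Xu ω, Xv ω)) | MeasurableSpace.comap Xu inferInstance]) 2 μ :=
    hGXu2.ae_eq hce
  rw [variance_eq_sub hcond2]
  have hint1 : ∫ ω, ((μ[(fun ω => f (Xu ω, Xv ω)) |
        MeasurableSpace.comap Xu inferInstance]) ^ 2) ω ∂μ
      = ∫ u, (∫ v, f (u, v) ∂νV) * (∫ v, f (u, v) ∂νV) ∂νU := by
    have hceq : (fun ω => (∫ v, f (Xu ω, v) ∂νV) * (∫ v, f (Xu ω, v) ∂νV)) =ᵐ[μ]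
        (μ[(fun ω => f (Xu ω, Xv ω)) | MeasurableSpace.comap Xu inferInstance]) ^ 2 :=
      hce.mono fun ω h => by rw [Pi.pow_apply, ← h]; ring
    rw [← integral_congr_ae hceq]
    conv_rhs => rw [hνU]
    exact (integral_map hXu.aemeasurable ((hGsm.mul hGsm).aestronglyMeasurable)).symm
  have hint2 : ∫ ω, (μ[(fun ω => f (Xu ω, Xv ω)) |
        MeasurableSpace.comap Xu inferInstance]) ω ∂μ = ∫ w, f w ∂(νU.prod νV) := by
    rw [integral_condExp hm]
    exact hEF
  rw [hint1, hint2, hRHS, hsplit, hC1, hC2]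
  ring
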